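/- Let Λ_c be a noncentral chi-squared random variable with p_c degrees of freedom and noncentrality parameter λ_c (i.e., Λ_c = ∑_{i=1}^{p_c}(Z_i+μ_i)² with Z_i i.i.d. standard Gaussian and ‖μ‖² = λ_c). Let N ≥ 1, let P^D_1,…,P^D_N ∈ [0,1) with P^D_max = max_i P^D_i, and let τ_c ≥ 0 satisfy τ_c ≤ p_c + λ_c − √(4N(p_c + 2λ_c)·ln(1/(1 − P^D_max))). Then Pr[Λ_c ≥ τ_c] ≥ 1 − ∏_{i=1}^N (1 − P^D_i); that is, the centralized detection probability P^D_c = Q(τ_c; p_c, λ_c) is at least the decentralized detection probability P^D_d = 1 − ∏_{i=1}^N (1 − P^D_i). -/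

import Mathlib

open MeasureTheory ProbabilityTheory

open scoped NNReal ENNReal Real in
lemma aux_log_one_add_ge {y : ℝ} (hy : 0 ≤ y) : y - y^2/2 ≤ Real.log (1 + y) := by
  set f : ℝ → ℝ := fun t => Real.log (1 + t) - t + t^2/2 with hf
  have hderiv : ∀ t : ℝ, 0 ≤ t → HasDerivAt f ((1+t)⁻¹ - 1 + t) t := by
    intro t ht
    have h1 : HasDerivAt (fun s : ℝ => 1 + s) 1 t := by
      simpa using (hasDerivAt_id t).const_add (1:ℝ)
    have h2 : HasDerivAt (fun s : ℝ => Real.log (1 + s)) ((1+t)⁻¹ * 1) t :=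
      (Real.hasDerivAt_log (by linarith)).comp t h1
    have h3 : HasDerivAt (fun s : ℝ => s^2/2) t t := by
      have := (hasDerivAt_pow 2 t).div_const 2
      simpa using this
    have := (h2.sub (hasDerivAt_id t)).add h3
    rw [mul_one] at this; exact this
  have hmono : MonotoneOn f (Set.Ici (0:ℝ)) := by
    apply monotoneOn_of_deriv_nonneg (convex_Ici 0)
    · intro t ht
      exact (hderiv t ht).continuousAt.continuousWithinAt
    · intro t ht
      rw [interior_Ici] at ht
      exact (hderiv t (le_of_lt ht)).differentiableAt.differentiableWithinAt
    · intro t ht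
      rw [interior_Ici] at ht
      rw [(hderiv t ht.le).deriv]
      have ht' : 0 < t := Set.mem_Ioi.mp ht
      have h1t : (0:ℝ) < 1 + t := by linarith
      have heq : (1+t)⁻¹ - 1 + t = t^2/(1+t) := by field_simp; ring
      rw [heq]; positivity
  have h0 : f 0 ≤ f y := hmono Set.self_mem_Ici hy hy
  simp only [hf, add_zero, Real.log_one, zero_pow, zero_div] at h0
  norm_num at h0
  linarith

open scoped NNReal ENNReal Real in
lemma mgf_sq_gaussian {Ω : Type*} [MeasurableSpace Ω] (P : Measure Ω)
    (Z : Ω → ℝ) (hZm : Measurable Z) (hZ : P.map Z = gaussianReal 0 1)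
    (c u : ℝ) (hu : 0 ≤ u) :
    mgf (fun ω => (Z ω + c)^2) P (-u)
      = (Real.sqrt (1 + 2*u))⁻¹ * Real.exp (-u * c^2 / (1 + 2*u)) := by
  have hℓ : (0:ℝ) < 1 + 2*u := by linarith
  set v : ℝ≥0 := ⟨(1+2*u)⁻¹, by positivity⟩ with hv
  have hvc : (v : ℝ) = (1+2*u)⁻¹ := rfl
  have hvne : v ≠ 0 := by
    rw [← NNReal.coe_ne_zero, hvc]; positivity
  set m : ℝ := -(2*u*c)/(1+2*u) with hm
  have h2π : (0:ℝ) < Real.sqrt (2*Real.pi) := Real.sqrt_pos.mpr (by positivity)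
  have hsq : (0:ℝ) < Real.sqrt (1+2*u) := Real.sqrt_pos.mpr hℓ
  have hpoint : ∀ x : ℝ, gaussianPDFReal 0 1 x * Real.exp (-u * (x + c)^2)
      = ((Real.sqrt (1+2*u))⁻¹ * Real.exp (-u * c^2 / (1+2*u))) * gaussianPDFReal m v x := by
    intro x
    have hL : gaussianPDFReal 0 1 x * Real.exp (-u*(x+c)^2)
        = (Real.sqrt (2*Real.pi))⁻¹ * Real.exp (-(x)^2/2 - u*(x+c)^2) := by
      simp only [gaussianPDFReal, NNReal.coe_one, mul_one, sub_zero]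
      rw [mul_assoc, ← Real.exp_add]
      ring_nf
    have hR : gaussianPDFReal m v x
        = Real.sqrt (1+2*u) * (Real.sqrt (2*Real.pi))⁻¹
            * Real.exp (-(x-m)^2*(1+2*u)/2) := by
      simp only [gaussianPDFReal, hvc]
      rw [Real.sqrt_mul (by positivity : (0:ℝ) ≤ 2*Real.pi), Real.sqrt_inv, mul_inv, inv_inv]
      have harg : -(x-m)^2 / (2*(1+2*u)⁻¹) = -(x-m)^2*(1+2*u)/2 := by
        field_simp
      rw [harg]
      ring
    rw [hL, hR]
    rw [show ((Real.sqrt (1+2*u))⁻¹ * Real.exp (-u * c^2 / (1+2*u)))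
        * (Real.sqrt (1+2*u) * (Real.sqrt (2*Real.pi))⁻¹ * Real.exp (-(x-m)^2*(1+2*u)/2))
        = ((Real.sqrt (1+2*u))⁻¹ * Real.sqrt (1+2*u)) * (Real.sqrt (2*Real.pi))⁻¹
          * (Real.exp (-u * c^2 / (1+2*u)) * Real.exp (-(x-m)^2*(1+2*u)/2)) by ring]
    rw [inv_mul_cancel₀ hsq.ne', one_mul, ← Real.exp_add]
    congr 1
    rw [hm]
    congr 1
    have hne : (1+2*u) ≠ 0 := hℓ.ne'
    field_simp
    ring
  have hmeas_f : Measurable (fun x : ℝ => Real.exp (-u * (x + c)^2)) := by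
    fun_prop
  have h1 : mgf (fun ω => (Z ω + c)^2) P (-u)
      = ∫ x, Real.exp (-u * (x + c)^2) ∂(P.map Z) := by
    rw [mgf, integral_map hZm.aemeasurable hmeas_f.aestronglyMeasurable]
  rw [h1, hZ, gaussianReal_of_var_ne_zero 0 one_ne_zero, gaussianPDF_def]
  have hodef : (fun x => ENNReal.ofReal (gaussianPDFReal 0 1 x))
      = (fun x => ((Real.toNNReal (gaussianPDFReal 0 1 x) : ℝ≥0) : ℝ≥0∞)) := rfl
  rw [hodef, integral_withDensity_eq_integral_smul
    ((measurable_gaussianPDFReal 0 1).real_toNNReal) _]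
  have hpdf_nonneg : ∀ x, 0 ≤ gaussianPDFReal 0 1 x :=
    fun x => (gaussianPDFReal_pos 0 1 x one_ne_zero).le
  have : ∀ x : ℝ, (Real.toNNReal (gaussianPDFReal 0 1 x) : ℝ≥0) • Real.exp (-u * (x + c)^2)
      = ((Real.sqrt (1+2*u))⁻¹ * Real.exp (-u * c^2 / (1+2*u))) * gaussianPDFReal m v x := by
    intro x
    rw [NNReal.smul_def, Real.coe_toNNReal _ (hpdf_nonneg x)]
    exact hpoint x
  simp_rw [this]
  rw [integral_const_mul, integral_gaussianPDFReal_eq_one m hvne, mul_one]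

/-- Theorem 1 of the paper: sufficient condition for `P^D_c ≥ P^D_d`.
Let `Λ_c` be noncentral chi-squared with `p_c` degrees of freedom and noncentrality
`λ_c` (realized as `∑ (Z i + μ i)²` with `Z i` i.i.d. standard Gaussians, `λ_c = ‖μ‖²`).
If `0 ≤ τ_c ≤ p_c + λ_c − √(4 N (p_c + 2 λ_c) ln(1/(1 − P^D_max)))`, then the
centralized detection probability `Pr[Λ_c ≥ τ_c]` is at least the decentralized one,
`1 − ∏ i (1 − P^D i)`. -/
theorem centralized_outperforms_decentralized
    {Ω : Type*} [MeasurableSpace Ω] (P : Measure Ω) [IsProbabilityMeasure P]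
    {pc : ℕ} (Z : Fin pc → Ω → ℝ) (hZmeas : ∀ i, Measurable (Z i))
    (hZindep : iIndepFun Z P)
    (hZ : ∀ i, P.map (Z i) = gaussianReal 0 1)
    (μ : Fin pc → ℝ) (lamc : ℝ) (hlamc : lamc = ∑ i, (μ i) ^ 2)
    {N : ℕ} (hN : 1 ≤ N) (PD : Fin N → ℝ)
    (hPD : ∀ i, 0 ≤ PD i ∧ PD i < 1)
    (PDmax : ℝ) (hPDmax : IsGreatest (Set.range PD) PDmax)
    (τc : ℝ) (hτc0 : 0 ≤ τc)
    (hτc : τc ≤ pc + lamc -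
      Real.sqrt (4 * N * (pc + 2 * lamc) * Real.log (1 / (1 - PDmax)))) :
    1 - ∏ i, (1 - PD i) ≤ (P {ω | τc ≤ ∑ i, (Z i ω + μ i) ^ 2}).toReal := by
  -- basic facts about PDmax
  obtain ⟨i0, hi0⟩ := hPDmax.1
  have hPDmax_lt : PDmax < 1 := hi0 ▸ (hPD i0).2
  have hPDmax_nonneg : 0 ≤ PDmax := hi0 ▸ (hPD i0).1
  have hPD_le : ∀ i, PD i ≤ PDmax := fun i => hPDmax.2 ⟨i, rfl⟩
  have h1PD : 0 < 1 - PDmax := by linarith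
  have hprod_ge : (1 - PDmax)^N ≤ ∏ i, (1 - PD i) := by
    calc (1 - PDmax)^N = ∏ _i : Fin N, (1 - PDmax) := by
          rw [Finset.prod_const, Finset.card_univ, Fintype.card_fin]
      _ ≤ ∏ i, (1 - PD i) :=
          Finset.prod_le_prod (fun i _ => h1PD.le) (fun i _ => by linarith [hPD_le i])
  have hprod_nonneg : 0 ≤ ∏ i, (1 - PD i) :=
    Finset.prod_nonneg fun i _ => by linarith [(hPD i).2]
  have hlam_nonneg : 0 ≤ lamc := hlamc ▸ Finset.sum_nonneg fun i _ => sq_nonneg _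
  -- Λ and the event
  set Λ : Ω → ℝ := fun ω => ∑ i, (Z i ω + μ i)^2 with hΛ
  have hΛmeas : Measurable Λ :=
    Finset.measurable_sum _ fun i _ => ((hZmeas i).add_const (μ i)).pow_const 2
  have hΛnonneg : ∀ ω, 0 ≤ Λ ω := fun ω => Finset.sum_nonneg fun i _ => sq_nonneg _
  by_cases hτneg : τc ≤ 0
  · have : {ω | τc ≤ Λ ω} = Set.univ := by
      ext ω; simp only [Set.mem_setOf_eq, Set.mem_univ, iff_true]
      exact hτneg.trans (hΛnonneg ω)
    rw [this, measure_univ, ENNReal.toReal_one]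
    linarith
  push_neg at hτneg
  -- positive case
  set L : ℝ := Real.log (1 / (1 - PDmax)) with hL
  have hLnonneg : 0 ≤ L := Real.log_nonneg (by rw [le_div_iff₀ h1PD]; linarith)
  set x : ℝ := N * L with hx
  have hxnonneg : 0 ≤ x := by positivity
  set S : ℝ := (pc : ℝ) + 2 * lamc with hS
  have hSnn : (0:ℝ) ≤ S := by
    rw [hS]; positivity
  have hSpos : 0 < S := by
    rcases hSnn.lt_or_eq with h | h
    · exact h
    · exfalso
      have hcast : (0:ℝ) ≤ (pc:ℝ) := Nat.cast_nonneg pc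
      have hpc0 : (pc:ℝ) = 0 := by rw [hS] at h; linarith
      have hlam0 : lamc = 0 := by rw [hS] at h; linarith
      rw [← h] at hτc
      simp only [mul_zero, zero_mul, Real.sqrt_zero] at hτc
      rw [hpc0, hlam0] at hτc
      linarith
  set u : ℝ := Real.sqrt (x / S) with hu_def
  have hu : 0 ≤ u := Real.sqrt_nonneg _
  have hu2 : u^2 * S = x := by
    rw [hu_def, Real.sq_sqrt (by positivity)]
    field_simp
  clear_value u
  clear_value S
  clear_value x
  clear_value L
  set ℓ : ℝ := 1 + 2*u with hℓdef
  have hℓ : (0:ℝ) < ℓ := by rw [hℓdef]; linarith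
  have hsqℓ : 0 < Real.sqrt ℓ := Real.sqrt_pos.mpr hℓ
  -- Chernoff
  have hXindep : iIndepFun (fun i ω => (Z i ω + μ i)^2) P :=
    hZindep.comp (fun i x => (x + μ i)^2)
      (fun i => (measurable_id.add_const (μ i)).pow_const 2)
  have hXmeas : ∀ i, Measurable (fun ω => (Z i ω + μ i)^2) :=
    fun i => ((hZmeas i).add_const (μ i)).pow_const 2
  have hmgf_sum : mgf Λ P (-u) = ∏ i, mgf (fun ω => (Z i ω + μ i)^2) P (-u) := by
    have hfun : Λ = ∑ i, (fun ω => (Z i ω + μ i)^2) := by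
      ext ω; simp [hΛ, Finset.sum_apply]
    rw [hfun]
    exact hXindep.mgf_sum hXmeas Finset.univ
  have hmgf_i : ∀ i : Fin pc, mgf (fun ω => (Z i ω + μ i)^2) P (-u)
      = (Real.sqrt ℓ)⁻¹ * Real.exp (-u * (μ i)^2 / ℓ) := by
    intro i
    rw [hℓdef]
    exact mgf_sq_gaussian P (Z i) (hZmeas i) (hZ i) (μ i) u hu
  have hmgf : mgf Λ P (-u) = ((Real.sqrt ℓ)^pc)⁻¹ * Real.exp (-u * lamc / ℓ) := by
    rw [hmgf_sum]
    simp_rw [hmgf_i]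
    rw [Finset.prod_mul_distrib, Finset.prod_const, Finset.card_univ, Fintype.card_fin,
      ← Real.exp_sum, inv_pow]
    congr 1
    rw [hlamc, Finset.mul_sum, Finset.sum_div]
  have hint : Integrable (fun ω => Real.exp (-u * Λ ω)) P := by
    refine Integrable.mono' (integrable_const 1)
      ((hΛmeas.const_mul (-u)).exp.aestronglyMeasurable) (ae_of_all _ fun ω => ?_)
    rw [Real.norm_eq_abs, Real.abs_exp, Real.exp_le_one_iff]
    have := hΛnonneg ω
    nlinarith
  have hchernoff : (P {ω | Λ ω ≤ τc}).toReal ≤ Real.exp (u * τc) * mgf Λ P (-u) := by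
    have := measure_le_le_exp_mul_mgf (X := Λ) (μ := P) τc (neg_nonpos.mpr hu) hint
    rwa [neg_neg] at this
  -- key exponent inequality
  have hsqrt_eq : Real.sqrt (4 * N * S * L) = Real.sqrt (4 * S * x) := by
    rw [hx]; ring_nf
  have husqrt : u * Real.sqrt (4 * S * x) = 2 * x := by
    rw [hu_def, ← Real.sqrt_mul (by positivity)]
    rw [show x / S * (4 * S * x) = (2*x)^2 by field_simp; ring]
    exact Real.sqrt_sq (by linarith)
  have hlog : 2*u - 2*u^2 ≤ Real.log ℓ := by
    have := aux_log_one_add_ge (y := 2*u) (by linarith)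
    rw [hℓdef]
    linarith
  have hinv : lamc * (1 - 2*u) ≤ lamc / ℓ := by
    have h4 : lamc / ℓ - lamc * (1 - 2*u) = lamc * (4*u^2) / ℓ := by
      field_simp
      ring
    have h5 : 0 ≤ lamc * (4*u^2) / ℓ := by positivity
    linarith
  have hτ' : u * τc ≤ u * ((pc:ℝ) + lamc) - 2 * x := by
    have h5 : u * τc ≤ u * ((pc:ℝ) + lamc - Real.sqrt (4 * S * x)) := by
      rw [← hsqrt_eq]
      exact mul_le_mul_of_nonneg_left hτc hu
    rw [mul_sub] at h5
    rw [husqrt] at h5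
    linarith
  have hmain : Real.exp (u * τc) * (((Real.sqrt ℓ)^pc)⁻¹ * Real.exp (-u * lamc / ℓ))
      ≤ Real.exp (-x) := by
    rw [mul_comm (Real.exp (u * τc)) _, mul_assoc, ← Real.exp_add]
    rw [inv_mul_le_iff₀ (pow_pos hsqℓ pc)]
    have hpow : (Real.sqrt ℓ)^pc = Real.exp ((pc:ℝ) * (Real.log ℓ / 2)) := by
      rw [← Real.log_sqrt hℓ.le, ← Real.log_pow, Real.exp_log (pow_pos hsqℓ pc)]
    rw [hpow, ← Real.exp_add, Real.exp_le_exp]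
    -- goal: -u*lamc/ℓ + u*τc ≤ -x + pc * (log ℓ / 2)
    have h1 : (pc:ℝ)*u - (pc:ℝ)*u^2 ≤ (pc:ℝ) * (Real.log ℓ / 2) := by
      have hc : (0:ℝ) ≤ (pc:ℝ)/2 := by positivity
      linarith [mul_le_mul_of_nonneg_left hlog hc]
    have h2 : u * (lamc * (1 - 2*u)) ≤ u * (lamc / ℓ) :=
      mul_le_mul_of_nonneg_left hinv hu
    have h3 : -u * lamc / ℓ = -(u * (lamc / ℓ)) := by ring
    rw [h3]
    have hS2 : u^2 * ((pc:ℝ) + 2*lamc) = x := by rw [← hS]; exact hu2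
    linarith [h2, hτ', h1, hS2]
  -- assemble
  have hA : MeasurableSet {ω | τc ≤ Λ ω} := measurableSet_le measurable_const hΛmeas
  have hcompl : (P {ω | τc ≤ Λ ω}ᶜ).toReal = 1 - (P {ω | τc ≤ Λ ω}).toReal := by
    rw [measure_compl hA (measure_ne_top _ _), measure_univ,
      ENNReal.toReal_sub_of_le prob_le_one ENNReal.one_ne_top, ENNReal.toReal_one]
  have hsubset : {ω | τc ≤ Λ ω}ᶜ ⊆ {ω | Λ ω ≤ τc} := by
    intro ω hω
    simp only [Set.mem_compl_iff, Set.mem_setOf_eq, not_le] at hω ⊢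
    exact hω.le
  have hstep : (P {ω | τc ≤ Λ ω}ᶜ).toReal ≤ ∏ i, (1 - PD i) := by
    calc (P {ω | τc ≤ Λ ω}ᶜ).toReal ≤ (P {ω | Λ ω ≤ τc}).toReal :=
          ENNReal.toReal_mono (measure_ne_top _ _) (measure_mono hsubset)
      _ ≤ Real.exp (u * τc) * mgf Λ P (-u) := hchernoff
      _ = Real.exp (u * τc) * (((Real.sqrt ℓ)^pc)⁻¹ * Real.exp (-u * lamc / ℓ)) := by
          rw [hmgf]
      _ ≤ Real.exp (-x) := hmain
      _ = (1 - PDmax)^N := by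
          rw [hx, hL, one_div, Real.log_inv]
          rw [show -((N:ℝ) * -Real.log (1 - PDmax)) = (N:ℝ) * Real.log (1 - PDmax) by ring]
          rw [Real.exp_nat_mul, Real.exp_log h1PD]
      _ ≤ ∏ i, (1 - PD i) := hprod_ge
  have hfin : (P {ω | τc ≤ Λ ω}).toReal = 1 - (P {ω | τc ≤ Λ ω}ᶜ).toReal := by
    rw [hcompl]; ring
  rw [hfin]
  linarith
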